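/- Let f(z) be a polynomial, let m_1,...,m_N be non-negative integers, and let R(z) = f(z)/∏_{j=1}^N (1 - z^j)^{m_j}. Suppose all coefficients of the Taylor expansion of R(z) at z = 0 are non-negative, and R(z) has a removable singularity at z = 1 (i.e., (1-z)^M divides f(z), where M = ∑_j m_j). Then R(z) is a polynomial. -/

import Mathlib

private lemma mul_nonneg_coeff' (p q : Polynomial ℝ) (hp : ∀ n, 0 ≤ p.coeff n)
    (hq : ∀ n, 0 ≤ q.coeff n) : ∀ n, 0 ≤ (p * q).coeff n := by
  intro n
  rw [Polynomial.coeff_mul]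
  exact Finset.sum_nonneg fun x _ => mul_nonneg (hp x.1) (hq x.2)

theorem stmt0 (N : ℕ) (f : Polynomial ℝ) (m : ℕ → ℕ) (R : PowerSeries ℝ)
    (hR : (f : PowerSeries ℝ) =
      R * ((∏ j ∈ Finset.Icc 1 N, (1 - Polynomial.X ^ j) ^ m j : Polynomial ℝ) : PowerSeries ℝ))
    (hnonneg : ∀ n, 0 ≤ PowerSeries.coeff n R)
    (hdiv : ((1 - Polynomial.X) ^ (∑ j ∈ Finset.Icc 1 N, m j) : Polynomial ℝ) ∣ f) :
    ∃ P : Polynomial ℝ, R = (P : PowerSeries ℝ) := by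
  classical
  set M := ∑ j ∈ Finset.Icc 1 N, m j with hM
  set Q : Polynomial ℝ :=
    ∏ j ∈ Finset.Icc 1 N, (∑ i ∈ Finset.range j, Polynomial.X ^ i) ^ m j with hQdef
  -- factorization of the denominator
  have hfact : (∏ j ∈ Finset.Icc 1 N, (1 - Polynomial.X ^ j) ^ m j : Polynomial ℝ)
      = (1 - Polynomial.X) ^ M * Q := by
    rw [hQdef, hM, ← Finset.prod_pow_eq_pow_sum, ← Finset.prod_mul_distrib]
    refine Finset.prod_congr rfl fun j hj => ?_
    rw [← mul_pow]
    congr 1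
    linear_combination geom_sum_mul (Polynomial.X : Polynomial ℝ) j
  obtain ⟨g, hg⟩ := hdiv
  -- cancel (1 - X)^M
  have hne : ((1 - Polynomial.X : Polynomial ℝ) : PowerSeries ℝ) ^ M ≠ 0 := by
    apply pow_ne_zero
    intro h
    have := congrArg (PowerSeries.constantCoeff) h
    simp [Polynomial.constantCoeff_apply] at this
  have hgRQ : (g : PowerSeries ℝ) = R * (Q : PowerSeries ℝ) := by
    apply mul_left_cancel₀ hne
    have := hR
    rw [hg, hfact] at this
    push_cast at this ⊢
    rw [this]; ring
  -- Q has non-negative coefficients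
  have hQnonneg : ∀ n, 0 ≤ Q.coeff n := by
    rw [hQdef]
    refine Finset.prod_induction _ (fun p => ∀ n, 0 ≤ p.coeff n)
      (fun p q hp hq => mul_nonneg_coeff' p q hp hq) (by simp [Polynomial.coeff_one]; intro n; positivity)
      (fun j hj => ?_)
    induction m j with
    | zero => simp [Polynomial.coeff_one]; intro n; positivity
    | succ k ih =>
        rw [pow_succ]
        refine mul_nonneg_coeff' _ _ ih fun n => ?_
        rw [Polynomial.finset_sum_coeff]
        refine Finset.sum_nonneg fun i _ => ?_
        rw [Polynomial.coeff_X_pow]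
        positivity
  -- Q(0) = 1
  have hQ0 : Q.coeff 0 = 1 := by
    rw [hQdef, ← Polynomial.constantCoeff_apply, map_prod]
    refine Finset.prod_eq_one fun j hj => ?_
    rw [map_pow]
    have h1 : Polynomial.constantCoeff (∑ i ∈ Finset.range j, (Polynomial.X : Polynomial ℝ) ^ i)
        = 1 := by
      rw [map_sum]
      have hj1 : 1 ≤ j := (Finset.mem_Icc.mp hj).1
      rw [Finset.sum_eq_single 0]
      · simp [Polynomial.constantCoeff_apply]
      · intro i _ hi
        simp [Polynomial.constantCoeff_apply, Polynomial.coeff_X_pow, Ne.symm hi]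
      · intro h; exact absurd (Finset.mem_range.mpr hj1) h
    rw [h1, one_pow]
  -- coefficients of R vanish beyond deg g
  have hkey : ∀ n, g.natDegree < n → PowerSeries.coeff n R = 0 := by
    intro n hn
    have hcoeff := congrArg (PowerSeries.coeff n) hgRQ
    rw [Polynomial.coeff_coe, Polynomial.coeff_eq_zero_of_natDegree_lt hn,
      PowerSeries.coeff_mul] at hcoeff
    have hterm : ∀ p ∈ Finset.HasAntidiagonal.antidiagonal n,
        0 ≤ PowerSeries.coeff p.1 R * PowerSeries.coeff p.2 (Q : PowerSeries ℝ) := by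
      intro p _
      refine mul_nonneg (hnonneg p.1) ?_
      rw [Polynomial.coeff_coe]
      exact hQnonneg p.2
    have hmem : ((n, 0) : ℕ × ℕ) ∈ Finset.HasAntidiagonal.antidiagonal n := by simp
    have := (Finset.sum_eq_zero_iff_of_nonneg hterm).mp hcoeff.symm (n, 0) hmem
    rw [Polynomial.coeff_coe, hQ0, mul_one] at this
    exact this
  refine ⟨R.trunc (g.natDegree + 1), ?_⟩
  ext n
  rw [Polynomial.coeff_coe, PowerSeries.coeff_trunc]
  split_ifs with h
  · rfl
  · exact hkey n (by omega)
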